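/- Fix a prime p, m > q ≥ 0, and l ≥ 1, and let G = ZMod(p^m). Suppose X is a G-space that admits no G-equivariant continuous map to E(l,m) \ E^q(l,m) (equivalently, by G-homotopy equivalence, to K(l,m,q)). Then for every continuous map f : X → ℝ^l there exists x ∈ X such that the set f^G(G·x) ⊆ (ℝ^l)^G has at most p^q elements; in particular f(G·x) has at most p^q elements. -/

import Mathlib

/-- The additive shift action of `ZMod n` on `(Fin l → ℝ)^{ZMod n}`: `(h • y) g = y (g + h)`. -/
def addShift {n l : ℕ} (h : ZMod n) (y : ZMod n → Fin l → ℝ) : ZMod n → Fin l → ℝ :=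
  fun g => y (g + h)

/-- The induced equivariant map `f^G`, `(f^G x) g = f (g • x)` (additively: `g` acting
via the identification of `ZMod n` with the acting group). -/
def inducedMap {X : Type*} {n l : ℕ} [MulAction (Multiplicative (ZMod n)) X]
    (f : X → Fin l → ℝ) (x : X) : ZMod n → Fin l → ℝ :=
  fun g => f (Multiplicative.ofAdd g • x)

/-- Let `G = ℤ/p^mℤ` act on a space `X`. If `X` admits no continuous
`G`-map to `E(l,m) \ E^q(l,m)` (the non-`p^q`-periodic points of `(ℝ^l)^G` with the
shift action), then for every continuous `f : X → ℝ^l` there is `x ∈ X` with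
`|f^G(G·x)| ≤ p^q`; in particular `|f(G·x)| ≤ p^q`. -/
theorem borsuk_ulam_from_no_G_map (p : ℕ) (hp : p.Prime) (m q l : ℕ) (hq : q < m) (hl : 1 ≤ l)
    {X : Type*} [TopologicalSpace X] [MulAction (Multiplicative (ZMod (p ^ m))) X]
    (hact : ∀ g : Multiplicative (ZMod (p ^ m)), Continuous fun x : X => g • x)
    (hnomap : ¬ ∃ F : X → (ZMod (p ^ m) → Fin l → ℝ), Continuous F ∧
        (∀ x, ∃ g : ZMod (p ^ m), F x (g + (p ^ q : ℕ)) ≠ F x g) ∧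
        (∀ (h : ZMod (p ^ m)) (x : X), F (Multiplicative.ofAdd h • x) = addShift h (F x)))
    (f : X → Fin l → ℝ) (hf : Continuous f) :
    ∃ x : X,
      Nat.card (inducedMap (n := p ^ m) f '' MulAction.orbit (Multiplicative (ZMod (p ^ m))) x) ≤ p ^ q ∧
      Nat.card (f '' MulAction.orbit (Multiplicative (ZMod (p ^ m))) x) ≤ p ^ q := by
  -- The induced map F := f^G is continuous and equivariant.
  set F := inducedMap (n := p ^ m) f with hFdef
  have hcont : Continuous F := continuous_pi fun g => hf.comp (hact _)
  have hequi : ∀ (h : ZMod (p ^ m)) (x : X),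
      F (Multiplicative.ofAdd h • x) = addShift h (F x) := by
    intro h x
    funext g
    show f (Multiplicative.ofAdd g • Multiplicative.ofAdd h • x)
        = f (Multiplicative.ofAdd (g + h) • x)
    rw [← mul_smul, ← ofAdd_add]
  have hx' : ¬ (∀ x, ∃ g : ZMod (p ^ m), F x (g + (p ^ q : ℕ)) ≠ F x g) :=
    fun h => hnomap ⟨F, hcont, h, hequi⟩
  push_neg at hx'
  obtain ⟨x, hx⟩ := hx'
  -- periodicity of F x
  have key : ∀ (n : ℕ) (c : ZMod (p ^ m)), F x (c + ((n * p ^ q : ℕ) : ZMod (p ^ m))) = F x c := by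
    intro n
    induction n with
    | zero => intro c; simp
    | succ n ih =>
      intro c
      have : ((((n + 1) * p ^ q : ℕ)) : ZMod (p ^ m))
          = ((n * p ^ q : ℕ) : ZMod (p ^ m)) + ((p ^ q : ℕ) : ZMod (p ^ m)) := by
        push_cast; ring
      rw [this, ← add_assoc, hx, ih]
  have hper : ∀ (a : ZMod (p ^ m)) (g : ZMod (p ^ m)),
      F x (g + a) = F x (g + ((a.val % p ^ q : ℕ) : ZMod (p ^ m))) := by
    intro a g
    haveI hne : NeZero (p ^ m) := ⟨pow_ne_zero _ hp.ne_zero⟩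
    have h1 : ((a.val : ℕ) : ZMod (p ^ m)) = a := ZMod.natCast_rightInverse a
    have h2 : a.val % p ^ q + a.val / p ^ q * p ^ q = a.val := Nat.mod_add_div' _ _
    have ha : a = ((a.val % p ^ q : ℕ) : ZMod (p ^ m))
        + (((a.val / p ^ q) * p ^ q : ℕ) : ZMod (p ^ m)) := by
      rw [← Nat.cast_add, h2, h1]
    conv_lhs => rw [ha, ← add_assoc]
    exact key _ _
  have hq0 : 0 < p ^ q := pow_pos hp.pos q
  -- the image of the orbit under F equals the range of a map from Fin (p^q)
  have horb : ∀ y ∈ MulAction.orbit (Multiplicative (ZMod (p ^ m))) x,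
      ∃ k : Fin (p ^ q), inducedMap (n := p ^ m) f y = addShift ((k : ℕ) : ZMod (p ^ m)) (F x) := by
    intro y hy
    obtain ⟨h, rfl⟩ := hy
    refine ⟨⟨(Multiplicative.toAdd h).val % p ^ q, Nat.mod_lt _ hq0⟩, ?_⟩
    show F (h • x) = _
    rw [show F (h • x) = addShift (Multiplicative.toAdd h) (F x) from hequi (Multiplicative.toAdd h) x]
    funext g
    exact hper (Multiplicative.toAdd h) g
  have hsub1 : inducedMap (n := p ^ m) f '' MulAction.orbit (Multiplicative (ZMod (p ^ m))) x
      = Set.range (fun k : Fin (p ^ q) => addShift ((k : ℕ) : ZMod (p ^ m)) (F x)) := by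
    apply Set.eq_of_subset_of_subset
    · rintro z ⟨y, hy, rfl⟩
      obtain ⟨k, hk⟩ := horb y hy
      exact ⟨k, hk.symm⟩
    · rintro z ⟨k, rfl⟩
      refine ⟨Multiplicative.ofAdd ((k : ℕ) : ZMod (p ^ m)) • x, ⟨_, rfl⟩, ?_⟩
      rw [show inducedMap (n := p ^ m) f (Multiplicative.ofAdd ((k : ℕ) : ZMod (p ^ m)) • x)
        = F (Multiplicative.ofAdd ((k : ℕ) : ZMod (p ^ m)) • x) from rfl, hequi]
  have hsub2 : f '' MulAction.orbit (Multiplicative (ZMod (p ^ m))) x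
      = Set.range (fun k : Fin (p ^ q) => F x ((k : ℕ) : ZMod (p ^ m))) := by
    apply Set.eq_of_subset_of_subset
    · rintro z ⟨y, hy, rfl⟩
      obtain ⟨h, rfl⟩ := hy
      refine ⟨⟨(Multiplicative.toAdd h).val % p ^ q, Nat.mod_lt _ hq0⟩, ?_⟩
      have h0 := hper (Multiplicative.toAdd h) 0
      rw [zero_add, zero_add] at h0
      exact h0.symm
    · rintro z ⟨k, rfl⟩
      exact ⟨Multiplicative.ofAdd ((k : ℕ) : ZMod (p ^ m)) • x, ⟨_, rfl⟩, rfl⟩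
  have hcard : ∀ (α : Type) (φ : Fin (p ^ q) → ZMod (p ^ m) → Fin l → ℝ), True := fun _ _ => trivial
  refine ⟨x, ?_, ?_⟩
  · rw [hsub1]
    calc Nat.card (Set.range (fun k : Fin (p ^ q) => addShift ((k : ℕ) : ZMod (p ^ m)) (F x)))
        ≤ Nat.card (Fin (p ^ q)) :=
          Nat.card_le_card_of_surjective _ Set.rangeFactorization_surjective
      _ = p ^ q := Nat.card_eq_fintype_card.trans (Fintype.card_fin _)
  · rw [hsub2]
    calc Nat.card (Set.range (fun k : Fin (p ^ q) => F x ((k : ℕ) : ZMod (p ^ m))))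
        ≤ Nat.card (Fin (p ^ q)) :=
          Nat.card_le_card_of_surjective _ Set.rangeFactorization_surjective
      _ = p ^ q := Nat.card_eq_fintype_card.trans (Fintype.card_fin _)
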